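/- arXiv:1608.02081 — 2 statements merged into one kernel-verified Lean document; each statement's English description precedes it below -/
import Mathlib

section
/- There exists a constant c such that every binary string σ has an extension τ with |τ| − |σ| < 2^{c+|σ|} − 1 and K(τ) > |τ|. -/
open scoped Classical ENNReal

/-- The first `n` bits of an infinite binary sequence. -/
def seg (X : ℕ → Bool) (n : ℕ) : List Bool := (List.range n).map X

/-- A computably enumerable predicate. -/
def CEPred {α : Type} [Primcodable α] (p : α → Prop) : Prop :=
  Partrec fun a => Part.assert (p a) fun _ => Part.some ()

/-- A set of strings is prefix-free. -/
def PrefixFreeSet (S : Set (List Bool)) : Prop :=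
  ∀ p q, p ∈ S → q ∈ S → p <+: q → p = q

/-- A prefix-free machine with outputs in `β`. -/
structure PFM (β : Type) [Primcodable β] where
  M : List Bool →. β
  comp : Partrec M
  pf : PrefixFreeSet {p | (M p).Dom}

/-- Kolmogorov complexity relative to a machine. -/
noncomputable def PFM.K {β : Type} [Primcodable β] (U : PFM β) (x : β) : ℕ :=
  sInf {n | ∃ p : List Bool, p.length = n ∧ x ∈ U.M p}

/-- An optimal (universal) prefix-free machine. -/
def PFM.Optimal {β : Type} [Primcodable β] (U : PFM β) : Prop :=
  (∀ x : β, ∃ p, x ∈ U.M p) ∧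
  ∀ N : PFM β, ∃ c : ℕ, ∀ p x, x ∈ N.M p → ∃ q, x ∈ U.M q ∧ q.length ≤ p.length + c

/-- The (chosen) shortest description of `x` on machine `U`. -/
noncomputable def PFM.star {β : Type} [Primcodable β] (U : PFM β)
    (h : ∀ x : β, ∃ p, x ∈ U.M p) (x : β) : List Bool :=
  Classical.choose (show ∃ p : List Bool, p.length = U.K x ∧ x ∈ U.M p from by
    have hne : {n | ∃ p : List Bool, p.length = n ∧ x ∈ U.M p}.Nonempty := by
      obtain ⟨p, hp⟩ := h x
      exact ⟨p.length, p, rfl, hp⟩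
    exact Nat.sInf_mem hne)

/-- A conditional prefix-free machine: the first argument is the oracle (condition) string,
the second the program; it is prefix-free on programs for each fixed condition. -/
structure CPFM (β : Type) [Primcodable β] where
  M : List Bool → List Bool →. β
  comp : Partrec₂ M
  pf : ∀ ρ, PrefixFreeSet {p | (M ρ p).Dom}

/-- Conditional Kolmogorov complexity `K(x | ρ)`. -/
noncomputable def CPFM.K {β : Type} [Primcodable β] (U : CPFM β) (ρ : List Bool) (x : β) : ℕ :=
  sInf {n | ∃ p : List Bool, p.length = n ∧ x ∈ U.M ρ p}

/-- An optimal conditional prefix-free machine. -/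
def CPFM.Optimal {β : Type} [Primcodable β] (U : CPFM β) : Prop :=
  (∀ ρ (x : β), ∃ p, x ∈ U.M ρ p) ∧
  ∀ N : CPFM β, ∃ c : ℕ, ∀ ρ p x, x ∈ N.M ρ p → ∃ q, x ∈ U.M ρ q ∧ q.length ≤ p.length + c

/-- A Martin-Löf test: a uniformly c.e. sequence of sets of strings generating open sets,
with the `n`-th level having total cylinder weight at most `2⁻ⁿ`. -/
structure MLTest where
  W : ℕ → Set (List Bool)
  ce : CEPred fun p : ℕ × List Bool => p.2 ∈ W p.1
  meas : ∀ n, (∑' σ : W n, ((2 : ℝ≥0∞))⁻¹ ^ (σ : List Bool).length) ≤ 2⁻¹ ^ n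

/-- `X` is Martin-Löf random iff it passes every Martin-Löf test. -/
def MLRandom (X : ℕ → Bool) : Prop :=
  ∀ T : MLTest, ∃ n, ∀ σ ∈ T.W n, seg X σ.length ≠ σ

/-- A Turing functional with oracle strings, inputs in ℕ and outputs in `β`:
computable and monotone (consistent) in the oracle. -/
structure TFun (β : Type) [Primcodable β] where
  φ : List Bool → ℕ →. β
  comp : Partrec₂ φ
  mono : ∀ ρ₀ ρ₁ : List Bool, ρ₀ <+: ρ₁ → ∀ n (y : β), y ∈ φ ρ₀ n → y ∈ φ ρ₁ n

/-- `Φ^X(n) = y`. -/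
def TFun.evalOracle {β : Type} [Primcodable β] (Φ : TFun β) (X : ℕ → Bool) (n : ℕ) (y : β) :
    Prop := ∃ s, y ∈ Φ.φ (seg X s) n

/-- `f` is computable from the oracle `X`. -/
def ComputableFrom {β : Type} [Primcodable β] (X : ℕ → Bool) (f : ℕ → β) : Prop :=
  ∃ Φ : TFun β, ∀ n, Φ.evalOracle X n (f n)

/-- The sequence `r` is pointedly `X`-computable. -/
def PointedlyComputable (X : ℕ → Bool) (r : ℕ → ℕ) : Prop :=
  StrictMono r ∧ ∃ Φ : TFun ℕ, ∀ n, r n ∈ Φ.φ (seg X (r n)) n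

/-- The set `A` is computable from the oracle `X`. -/
def SetComputableFrom (X : ℕ → Bool) (A : ℕ → Prop) : Prop :=
  ∃ Φ : TFun Bool, ∀ n, ∃ b, Φ.evalOracle X n b ∧ (b = true ↔ A n)

/-- The halting problem. -/
def HaltingSet (n : ℕ) : Prop :=
  ((Denumerable.ofNat Nat.Partrec.Code n).eval n).Dom

open Mathlib

/-- Cylinder above `p` inside length-`N` strings. -/
noncomputable def cyl (N : ℕ) (p : List Bool) : Finset (List.Vector Bool N) :=
  Finset.univ.filter (fun w => p <+: w.toList)

lemma cyl_card {N : ℕ} (p : List Bool) (hp : p.length ≤ N) :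
    (cyl N p).card = 2 ^ (N - p.length) := by
  classical
  have himg : cyl N p = Finset.univ.image (β := List.Vector Bool N)
      (fun v : List.Vector Bool (N - p.length) =>
        id (α := List.Vector Bool N) ⟨p ++ v.toList, by simp [Nat.add_sub_cancel' hp]⟩) := by
    ext w
    simp only [cyl, Finset.mem_filter, Finset.mem_univ, true_and, Finset.mem_image]
    constructor
    · rintro ⟨t, ht⟩
      have hlen : t.length = N - p.length := by
        have hwl : w.toList.length = N := w.toList_length
        have hl := congrArg List.length ht
        simp only [List.length_append] at hl
        omega
      exact ⟨⟨t, hlen⟩, by apply Subtype.ext; exact ht⟩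
    · rintro ⟨v, rfl⟩
      exact ⟨v.toList, rfl⟩
  rw [himg, Finset.card_image_of_injective _ ?_, Finset.card_univ, card_vector,
    Fintype.card_bool]
  intro v v' h
  apply Subtype.ext
  have := congrArg (fun w : List.Vector Bool N => w.toList) h
  exact List.append_cancel_left (show p ++ v.toList = p ++ v'.toList from this)

lemma cyl_disj {N : ℕ} {p q : List Bool} (h1 : ¬ p <+: q) (h2 : ¬ q <+: p) :
    Disjoint (cyl N p) (cyl N q) := by
  rw [Finset.disjoint_left]
  intro w hw hw'
  simp only [cyl, Finset.mem_filter, Finset.mem_univ, true_and] at hw hw'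
  rcases List.prefix_or_prefix_of_prefix hw hw' with h | h
  · exact h1 h
  · exact h2 h


theorem stmt12 (U : PFM (List Bool)) (hU : U.Optimal) :
    ∃ c : ℕ, ∀ σ : List Bool, ∃ τ : List Bool, σ <+: τ ∧
      τ.length - σ.length < 2 ^ (c + σ.length) - 1 ∧ τ.length < U.K τ := by
  refine ⟨2, fun σ => ?_⟩
  by_contra hcon
  push_neg at hcon
  set m := σ.length with hm
  set N := m + 2 ^ m with hN
  have hm1 : (1:ℕ) ≤ 2 ^ m := Nat.one_le_two_pow
  have hprog : ∀ x : List Bool, ∃ p : List Bool, p.length = U.K x ∧ x ∈ U.M p := by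
    intro x
    have hne : {n | ∃ p : List Bool, p.length = n ∧ x ∈ U.M p}.Nonempty := by
      obtain ⟨p, hp⟩ := hU.1 x
      exact ⟨p.length, p, rfl, hp⟩
    exact Nat.sInf_mem hne
  choose P hP1 hP2 using hprog
  classical
  let E : ℕ → Finset (List Bool) := fun n =>
    Finset.univ.image (fun v : List.Vector Bool (n - m) => σ ++ v.toList)
  let T : Finset (List Bool) := (Finset.Icc m N).biUnion E
  have hmemT : ∀ τ ∈ T, σ <+: τ ∧ m ≤ τ.length ∧ τ.length ≤ N := by
    intro τ hτ
    simp only [T, E, Finset.mem_biUnion, Finset.mem_Icc, Finset.mem_image,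
      Finset.mem_univ, true_and] at hτ
    obtain ⟨n, ⟨hn1, hn2⟩, v, rfl⟩ := hτ
    have hv : v.toList.length = n - m := v.toList_length
    refine ⟨⟨v.toList, rfl⟩, ?_, ?_⟩ <;> simp only [List.length_append, hv] <;> omega
  have hKle : ∀ τ ∈ T, (P τ).length ≤ τ.length := by
    intro τ hτ
    obtain ⟨h1, h2, h3⟩ := hmemT τ hτ
    have hK : U.K τ ≤ τ.length := by
      apply hcon τ h1
      have h4 : (2:ℕ) ^ (2 + m) = 4 * 2 ^ m := by ring
      omega
    rw [hP1]; exact hK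
  -- lower bound on the weighted sum
  have hEdisj : (↑(Finset.Icc m N) : Set ℕ).PairwiseDisjoint E := by
    intro a ha b hb hab
    simp only [Finset.mem_coe, Finset.mem_Icc] at ha hb
    simp only [Function.onFun]
    rw [Finset.disjoint_left]
    intro τ h1 h2
    simp only [E, Finset.mem_image, Finset.mem_univ, true_and] at h1 h2
    obtain ⟨v, rfl⟩ := h1
    obtain ⟨v', hv'⟩ := h2
    have hle := congrArg List.length hv'
    simp only [List.length_append, List.Vector.toList_length] at hle
    omega
  have hsum1 : ∑ τ ∈ T, 2 ^ (N - τ.length) = (2 ^ m + 1) * 2 ^ (2 ^ m) := by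
    rw [Finset.sum_biUnion hEdisj]
    have hinner : ∀ n ∈ Finset.Icc m N, ∑ τ ∈ E n, (2:ℕ) ^ (N - τ.length)
        = 2 ^ (N - m) := by
      intro n hn
      simp only [Finset.mem_Icc] at hn
      have hinj : ∀ v ∈ (Finset.univ : Finset (List.Vector Bool (n - m))),
          ∀ v' ∈ Finset.univ, σ ++ v.toList = σ ++ v'.toList → v = v' := by
        intro v _ v' _ h
        exact Subtype.ext (List.append_cancel_left h)
      rw [show E n = Finset.univ.image
            (fun v : List.Vector Bool (n - m) => σ ++ v.toList) from rfl,
        Finset.sum_image hinj]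
      have hterm : ∀ v : List.Vector Bool (n - m),
          (2:ℕ) ^ (N - (σ ++ v.toList).length) = 2 ^ (N - n) := by
        intro v
        have : (σ ++ v.toList).length = n := by
          simp only [List.length_append, List.Vector.toList_length]; omega
        rw [this]
      rw [Finset.sum_congr rfl (fun v _ => hterm v), Finset.sum_const,
        Finset.card_univ, card_vector, Fintype.card_bool, smul_eq_mul, ← pow_add]
      congr 1
      omega
    rw [Finset.sum_congr rfl hinner, Finset.sum_const, Nat.card_Icc, smul_eq_mul]
    have e1 : N + 1 - m = 2 ^ m + 1 := by omega
    have e2 : N - m = 2 ^ m := by omega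
    rw [e1, e2]
  -- upper bound via disjoint cylinders
  have hsum2 : ∑ τ ∈ T, (2:ℕ) ^ (N - τ.length) ≤ 2 ^ N := by
    calc ∑ τ ∈ T, (2:ℕ) ^ (N - τ.length)
        ≤ ∑ τ ∈ T, (cyl N (P τ)).card := by
          apply Finset.sum_le_sum
          intro τ hτ
          rw [cyl_card _ (le_trans (hKle τ hτ) (hmemT τ hτ).2.2)]
          exact Nat.pow_le_pow_right (by norm_num)
            (Nat.sub_le_sub_left (hKle τ hτ) N)
      _ = (T.biUnion (fun τ => cyl N (P τ))).card := by
          rw [Finset.card_biUnion]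
          intro τ hτ τ' hτ' hne
          have hkey : P τ ≠ P τ' := by
            intro he
            exact hne (Part.mem_unique (hP2 τ) (he ▸ hP2 τ'))
          apply cyl_disj
          · intro hpre
            exact hkey (U.pf _ _ (Part.dom_iff_mem.2 ⟨_, hP2 τ⟩)
              (Part.dom_iff_mem.2 ⟨_, hP2 τ'⟩) hpre)
          · intro hpre
            exact hkey ((U.pf _ _ (Part.dom_iff_mem.2 ⟨_, hP2 τ'⟩)
              (Part.dom_iff_mem.2 ⟨_, hP2 τ⟩) hpre).symm)
      _ ≤ (Finset.univ : Finset (List.Vector Bool N)).card :=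
          Finset.card_le_univ _
      _ = 2 ^ N := by rw [Finset.card_univ, card_vector, Fintype.card_bool]
  rw [hsum1, show (2:ℕ) ^ N = 2 ^ m * 2 ^ (2 ^ m) from by rw [hN, pow_add]] at hsum2
  have hfin := Nat.le_of_mul_le_mul_right hsum2 (Nat.pow_pos (by norm_num))
  omega
end

section
/- There exists a real X, a computable strictly increasing sequence of positions (ℓ_n) with X(ℓ_n − 1) = 0 for all n (so X is not Martin-Löf random), and an X-computable strictly increasing sequence (r_n) such that K(X↾r_n) > r_n for all n. -/
open scoped Classical ENNReal

namespace S14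

def sp (i : ℕ) : ℕ := 2 ^ (2 ^ i)

lemma sp_mono : StrictMono sp := fun _ _ h =>
  Nat.pow_lt_pow_right one_lt_two (Nat.pow_lt_pow_right one_lt_two h)

lemma lt_sp (i : ℕ) : i < sp i :=
  lt_of_lt_of_le (Nat.lt_two_pow_self)
    (Nat.pow_le_pow_right (by norm_num) (Nat.le_of_lt (Nat.lt_two_pow_self)))

lemma two_mul_sp_le (i : ℕ) : 2 * sp i ≤ sp (i + 1) := by
  have : 2 ^ i + 1 ≤ 2 ^ (i+1) := by
    have h1 : 1 ≤ 2 ^ i := Nat.one_le_two_pow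
    have h2 : 2 ^ (i+1) = 2 ^ i * 2 := pow_succ 2 i
    omega
  calc 2 * sp i = 2 ^ (2 ^ i + 1) := by rw [sp]; ring
  _ ≤ 2 ^ (2 ^ (i+1)) := Nat.pow_le_pow_right (by norm_num) this

def isSp (i : ℕ) : Prop := ∃ k, sp k = i

/-- functions with prescribed values on `s` -/
lemma card_filter_fun {α : Type} [Fintype α] [DecidableEq α] (s : Finset α) (g : α → Bool)
    [DecidablePred fun f : α → Bool => ∀ a ∈ s, f a = g a] :
    (Finset.univ.filter (fun f : α → Bool => ∀ a ∈ s, f a = g a)).card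
      = 2 ^ (Fintype.card α - s.card) := by
  rw [← Fintype.card_subtype]
  have e : {f : α → Bool // ∀ a ∈ s, f a = g a} ≃ ((sᶜ : Finset α) → Bool) :=
    { toFun := fun F x => F.1 x.1
      invFun := fun G => ⟨fun a => if h : a ∈ s then g a else G ⟨a, Finset.mem_compl.2 h⟩,
        fun a ha => dif_pos ha⟩
      left_inv := by
        intro F; apply Subtype.ext; funext a
        by_cases h : a ∈ s
        · simp [h, F.2 a h]
        · simp [h]
      right_inv := by
        intro G; funext x
        have := Finset.mem_compl.1 x.2
        simp [this] }
  rw [Fintype.card_congr e, Fintype.card_fun]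
  simp [Finset.card_compl]

def allL (r : ℕ) : Finset (List Bool) := Finset.univ.image (fun f : Fin r → Bool => List.ofFn f)

lemma mem_allL {r : ℕ} {σ : List Bool} : σ ∈ allL r ↔ σ.length = r := by
  constructor
  · rintro h
    obtain ⟨f, -, rfl⟩ := Finset.mem_image.1 h
    simp
  · intro h
    refine Finset.mem_image.2 ⟨fun i => σ.get (Fin.cast h.symm i), Finset.mem_univ _, ?_⟩
    subst h
    exact List.ofFn_get σ

lemma getD_ofFn {r : ℕ} (f : Fin r → Bool) {i : ℕ} (hi : i < r) :
    (List.ofFn f).getD i false = f ⟨i, hi⟩ := by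
  rw [List.getD_eq_getElem _ _ (by simpa using hi)]
  simp

lemma cardLists {r : ℕ} (s : Finset ℕ) (hs : ∀ i ∈ s, i < r) (g : ℕ → Bool) :
    ((allL r).filter (fun σ => ∀ i ∈ s, σ.getD i false = g i)).card = 2 ^ (r - s.card) := by
  have key := card_filter_fun (s.attachFin hs) (fun a : Fin r => g a.1)
  rw [Finset.card_attachFin] at key
  simp only [Fintype.card_fin] at key
  rw [← key]
  apply Finset.card_bij' (i := fun σ _ => fun i : Fin r => σ.getD i.1 false)
    (j := fun f _ => List.ofFn f)
  · intro σ hσ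
    obtain ⟨hσ1, hσ2⟩ := Finset.mem_filter.1 hσ
    refine Finset.mem_filter.2 ⟨Finset.mem_univ _, ?_⟩
    intro a ha
    exact hσ2 a.1 ((Finset.mem_attachFin hs).1 ha)
  · intro f hf
    obtain ⟨-, hf2⟩ := Finset.mem_filter.1 hf
    refine Finset.mem_filter.2 ⟨mem_allL.2 (by simp), ?_⟩
    intro i hi
    have hir := hs i hi
    rw [getD_ofFn _ hir]
    exact hf2 ⟨i, hir⟩ ((Finset.mem_attachFin hs).2 hi)
  · intro σ hσ
    have hlen : σ.length = r := mem_allL.1 (Finset.mem_filter.1 hσ).1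
    apply List.ext_getElem (by simp [hlen])
    intro i h1 h2
    rw [List.getElem_ofFn]
    exact List.getD_eq_getElem σ false h2
  · intro f hf
    funext i
    exact getD_ofFn f i.2

lemma prefix_of_getD {τ σ : List Bool} (h : τ.length ≤ σ.length)
    (hg : ∀ i < τ.length, σ.getD i false = τ.getD i false) : τ <+: σ := by
  rw [List.prefix_iff_eq_take]
  apply List.ext_getElem (by simp [Nat.min_eq_left h])
  intro i h1 h2
  have hit : i < τ.length := h1
  have his : i < σ.length := lt_of_lt_of_le hit h
  have := hg i hit
  rw [List.getD_eq_getElem _ _ his, List.getD_eq_getElem _ _ hit] at this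
  simp [List.getElem_take, this]

lemma getD_prefix {τ σ : List Bool} (h : τ <+: σ) {i : ℕ} (hi : i < τ.length) (d : Bool) :
    σ.getD i d = τ.getD i d := by
  obtain ⟨t, rfl⟩ := h
  exact List.getD_append _ _ _ _ hi

/-- finite Kraft inequality -/
lemma kraft (P : Finset (List Bool)) (hP : ∀ p ∈ P, ∀ q ∈ P, p <+: q → p = q) :
    ∑ p ∈ P, ((2 : ℝ≥0∞))⁻¹ ^ p.length ≤ 1 := by
  set N := P.sup List.length with hN
  have hle : ∀ p ∈ P, p.length ≤ N := fun p hp => Finset.le_sup (f := List.length) hp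
  set E : List Bool → Finset (List Bool) := fun p =>
    (allL N).filter (fun σ => ∀ i ∈ Finset.range p.length, σ.getD i false = p.getD i false)
    with hE
  have hcard : ∀ p ∈ P, (E p).card = 2 ^ (N - p.length) := by
    intro p hp
    rw [hE]
    rw [cardLists (Finset.range p.length)
      (fun i hi => lt_of_lt_of_le (Finset.mem_range.1 hi) (hle p hp)) (fun i => p.getD i false)]
    simp
  have hpre : ∀ p ∈ P, ∀ σ ∈ E p, p <+: σ := by
    intro p hp σ hσ
    obtain ⟨h1, h2⟩ := Finset.mem_filter.1 hσ
    have hlen : σ.length = N := mem_allL.1 h1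
    exact prefix_of_getD (hlen ▸ hle p hp) (fun i hi => h2 i (Finset.mem_range.2 hi))
  have hdisj : ∀ p ∈ P, ∀ q ∈ P, p ≠ q → Disjoint (E p) (E q) := by
    intro p hp q hq hne
    rw [Finset.disjoint_left]
    intro σ hσp hσq
    rcases le_total p.length q.length with hl | hl
    · exact hne (hP p hp q hq (List.prefix_of_prefix_length_le (hpre p hp σ hσp) (hpre q hq σ hσq) hl))
    · exact hne (hP q hq p hp (List.prefix_of_prefix_length_le (hpre q hq σ hσq) (hpre p hp σ hσp) hl)).symm
  have hsum : ∑ p ∈ P, 2 ^ (N - p.length) ≤ 2 ^ N := by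
    calc ∑ p ∈ P, 2 ^ (N - p.length) = ∑ p ∈ P, (E p).card :=
          Finset.sum_congr rfl (fun p hp => (hcard p hp).symm)
      _ = (P.biUnion E).card := (Finset.card_biUnion hdisj).symm
      _ ≤ (allL N).card := Finset.card_le_card (by
          intro σ hσ
          obtain ⟨p, -, hσp⟩ := Finset.mem_biUnion.1 hσ
          exact (Finset.mem_filter.1 hσp).1)
      _ ≤ 2 ^ N := by
          rw [allL]
          calc ((Finset.univ : Finset (Fin N → Bool)).image _).card
              ≤ (Finset.univ : Finset (Fin N → Bool)).card := Finset.card_image_le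
            _ = 2 ^ N := by simp [Fintype.card_fun]
  have h2ne : (2 : ℝ≥0∞) ≠ 0 := by norm_num
  have h2net : (2 : ℝ≥0∞) ≠ ⊤ := by norm_num
  have hpow1 : ∀ M : ℕ, (2 : ℝ≥0∞) ^ M * (2 : ℝ≥0∞)⁻¹ ^ M = 1 := by
    intro M
    rw [← mul_pow, ENNReal.mul_inv_cancel h2ne h2net, one_pow]
  have hterm : ∀ p ∈ P, ((2 : ℝ≥0∞))⁻¹ ^ p.length
      = (2 : ℝ≥0∞) ^ (N - p.length) * (2 : ℝ≥0∞)⁻¹ ^ N := by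
    intro p hp
    have h : (2 : ℝ≥0∞)⁻¹ ^ N = (2 : ℝ≥0∞)⁻¹ ^ (N - p.length) * (2 : ℝ≥0∞)⁻¹ ^ p.length := by
      rw [← pow_add]; congr 1; have := hle p hp; omega
    rw [h, ← mul_assoc, hpow1, one_mul]
  calc ∑ p ∈ P, ((2 : ℝ≥0∞))⁻¹ ^ p.length
      = ∑ p ∈ P, (2 : ℝ≥0∞) ^ (N - p.length) * (2 : ℝ≥0∞)⁻¹ ^ N := Finset.sum_congr rfl hterm
    _ = (∑ p ∈ P, (2 : ℝ≥0∞) ^ (N - p.length)) * (2 : ℝ≥0∞)⁻¹ ^ N := by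
        rw [Finset.sum_mul]
    _ ≤ (2 : ℝ≥0∞) ^ N * (2 : ℝ≥0∞)⁻¹ ^ N := by
        apply mul_le_mul_left
        calc ∑ p ∈ P, (2 : ℝ≥0∞) ^ (N - p.length)
            = ((∑ p ∈ P, 2 ^ (N - p.length) : ℕ) : ℝ≥0∞) := by push_cast; ring_nf
          _ ≤ ((2 ^ N : ℕ) : ℝ≥0∞) := by exact_mod_cast Nat.cast_le.2 hsum
          _ = (2 : ℝ≥0∞) ^ N := by push_cast; ring
    _ = 1 := hpow1 N

end S14
-- ===== Section 2: counting with the machine, and the construction =====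
namespace S14

variable (U : PFM (List Bool))

noncomputable def prog (hU : U.Optimal) (x : List Bool) : List Bool := U.star hU.1 x

lemma prog_spec (hU : U.Optimal) (x : List Bool) :
    (prog U hU x).length = U.K x ∧ x ∈ U.M (prog U hU x) := by
  have h := Classical.choose_spec (show ∃ p : List Bool, p.length = U.K x ∧ x ∈ U.M p from by
    have hne : {n | ∃ p : List Bool, p.length = n ∧ x ∈ U.M p}.Nonempty := by
      obtain ⟨p, hp⟩ := hU.1 x
      exact ⟨p.length, p, rfl, hp⟩
    exact Nat.sInf_mem hne)
  exact h

noncomputable def Bad (r : ℕ) : Finset (List Bool) :=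
  (allL r).filter (fun σ => U.K σ ≤ r)

lemma mem_Bad {r : ℕ} {σ : List Bool} : σ ∈ Bad U r ↔ σ.length = r ∧ U.K σ ≤ r := by
  rw [Bad, Finset.mem_filter, mem_allL]

lemma kraftBad (hU : U.Optimal) (F : Finset ℕ) :
    ∑ r ∈ F, ((Bad U r).card : ℝ≥0∞) * (2 : ℝ≥0∞)⁻¹ ^ r ≤ 1 := by
  classical
  set T := F.biUnion (Bad U) with hT
  have hinj : ∀ x ∈ T, ∀ y ∈ T, prog U hU x = prog U hU y → x = y := by
    intro x _ y _ h
    exact Part.mem_unique (prog_spec U hU x).2 (by rw [h]; exact (prog_spec U hU y).2)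
  have step1 : ∑ r ∈ F, ((Bad U r).card : ℝ≥0∞) * (2 : ℝ≥0∞)⁻¹ ^ r
      = ∑ σ ∈ T, (2 : ℝ≥0∞)⁻¹ ^ σ.length := by
    rw [hT, Finset.sum_biUnion]
    · apply Finset.sum_congr rfl
      intro r _
      rw [Finset.sum_congr rfl (fun σ hσ => by rw [(mem_Bad U).1 hσ |>.1])]
      simp [mul_comm]
    · intro r₁ h₁ r₂ h₂ hne
      rw [Function.onFun, Finset.disjoint_left]
      intro σ hσ1 hσ2
      exact hne (((mem_Bad U).1 hσ1).1 ▸ ((mem_Bad U).1 hσ2).1.symm ▸ rfl)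
  have step2 : ∑ σ ∈ T, (2 : ℝ≥0∞)⁻¹ ^ σ.length
      ≤ ∑ σ ∈ T, (2 : ℝ≥0∞)⁻¹ ^ (prog U hU σ).length := by
    apply Finset.sum_le_sum
    intro σ hσ
    obtain ⟨r, _, hσr⟩ := Finset.mem_biUnion.1 hσ
    obtain ⟨hlen, hK⟩ := (mem_Bad U).1 hσr
    apply pow_le_pow_of_le_one zero_le (ENNReal.inv_le_one.2 one_le_two)
    rw [(prog_spec U hU σ).1]
    omega
  have step3 : ∑ σ ∈ T, (2 : ℝ≥0∞)⁻¹ ^ (prog U hU σ).length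
      = ∑ p ∈ T.image (prog U hU), (2 : ℝ≥0∞)⁻¹ ^ p.length :=
    (Finset.sum_image (f := fun p : List Bool => (2:ℝ≥0∞)⁻¹ ^ p.length) hinj).symm
  have step4 : ∑ p ∈ T.image (prog U hU), (2 : ℝ≥0∞)⁻¹ ^ p.length ≤ 1 := by
    apply kraft
    intro p hp q hq hpre
    obtain ⟨x, _, rfl⟩ := Finset.mem_image.1 hp
    obtain ⟨y, _, rfl⟩ := Finset.mem_image.1 hq
    exact U.pf _ _ (Part.dom_iff_mem.2 ⟨x, (prog_spec U hU x).2⟩)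
      (Part.dom_iff_mem.2 ⟨y, (prog_spec U hU y).2⟩) hpre
  calc _ = _ := step1
    _ ≤ _ := step2
    _ = _ := step3
    _ ≤ 1 := step4

noncomputable def eSet (m r : ℕ) : Finset ℕ :=
  (Finset.range r).filter (fun i => m ≤ i ∧ isSp i)

lemma exists_good (hU : U.Optimal) (m : ℕ) :
    ∃ r, m < r ∧ m + (eSet m r).card < r ∧
      (Bad U r).card < 2 ^ (r - m - (eSet m r).card) := by
  classical
  set k := m + 3 with hk
  have hmk : m + 1 ≤ 2 ^ m := Nat.lt_two_pow_self
  have hk2 : m + k + 3 ≤ 2 ^ k := by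
    have : 2 ^ k = 8 * 2 ^ m := by rw [hk, pow_add]; ring
    omega
  have hspk : m + k + 3 ≤ sp k := by
    have h1 : 2 ^ k ≤ sp k := Nat.pow_le_pow_right (by norm_num) (Nat.le_of_lt (Nat.lt_two_pow_self))
    omega
  -- bound on the number of special positions below sp (k+1)
  have hesub : ∀ r ≤ sp (k+1), ∀ m', (eSet m' r).card ≤ k + 1 := by
    intro r hr m'
    have hsubset : eSet m' r ⊆ (Finset.range (k+1)).image sp := by
      intro i hi
      have h := Finset.mem_filter.1 hi
      have hir := Finset.mem_range.1 h.1
      obtain ⟨j, rfl⟩ := h.2.2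
      refine Finset.mem_image.2 ⟨j, Finset.mem_range.2 ?_, rfl⟩
      by_contra hj
      push_neg at hj
      have := sp_mono.le_iff_le.2 hj
      omega
    calc (eSet m' r).card ≤ _ := Finset.card_le_card hsubset
      _ ≤ (Finset.range (k+1)).card := Finset.card_image_le
      _ = k + 1 := Finset.card_range _
  -- the block has at least 2^(m+k+2) elements
  have hblock : 2 ^ (m + k + 2) ≤ sp (k+1) - sp k := by
    have h1 := two_mul_sp_le k
    have h2 : 2 ^ (m + k + 2) ≤ sp k := by
      rw [show sp k = 2 ^ (2^k) from rfl]
      exact Nat.pow_le_pow_right (by norm_num) (by omega)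
    omega
  -- main claim : some r in the block works with e := k+1
  have main : ∃ r ∈ Finset.Ioc (sp k) (sp (k+1)), (Bad U r).card < 2 ^ (r - m - (k+1)) := by
    by_contra hcon
    push_neg at hcon
    have hge : ∀ r ∈ Finset.Ioc (sp k) (sp (k+1)),
        (2 : ℝ≥0∞)⁻¹ ^ (m + k + 1) ≤ ((Bad U r).card : ℝ≥0∞) * (2 : ℝ≥0∞)⁻¹ ^ r := by
      intro r hr
      obtain ⟨hr1, hr2⟩ := Finset.mem_Ioc.1 hr
      have hrbig : m + k + 1 ≤ r := by omega
      have hcard := hcon r hr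
      calc (2 : ℝ≥0∞)⁻¹ ^ (m + k + 1)
          = (2 : ℝ≥0∞) ^ (r - m - (k+1)) * (2 : ℝ≥0∞)⁻¹ ^ r := by
            have : (2 : ℝ≥0∞)⁻¹ ^ r
                = (2 : ℝ≥0∞)⁻¹ ^ (r - m - (k+1)) * (2 : ℝ≥0∞)⁻¹ ^ (m + k + 1) := by
              rw [← pow_add]; congr 1; omega
            rw [this, ← mul_assoc, ← mul_pow, ENNReal.mul_inv_cancel (by norm_num) (by norm_num),
              one_pow, one_mul]
        _ ≤ ((Bad U r).card : ℝ≥0∞) * (2 : ℝ≥0∞)⁻¹ ^ r := by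
            apply mul_le_mul_left
            calc (2 : ℝ≥0∞) ^ (r - m - (k+1)) = ((2 ^ (r - m - (k+1)) : ℕ) : ℝ≥0∞) := by
                  push_cast; ring
              _ ≤ _ := Nat.cast_le.2 hcard
    have : (2 : ℝ≥0∞) ≤ 1 := by
      calc (2 : ℝ≥0∞) = (2 ^ (m+k+2) : ℝ≥0∞) * (2 : ℝ≥0∞)⁻¹ ^ (m + k + 1) := by
            rw [pow_succ]
            rw [mul_comm ((2:ℝ≥0∞) ^ (m+k+1)) 2, mul_assoc, ← mul_pow,
              ENNReal.mul_inv_cancel (by norm_num) (by norm_num), one_pow, mul_one]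
        _ ≤ ((Finset.Ioc (sp k) (sp (k+1))).card : ℝ≥0∞) * (2 : ℝ≥0∞)⁻¹ ^ (m + k + 1) := by
            apply mul_le_mul_left
            rw [Nat.card_Ioc]
            calc ((2:ℝ≥0∞) ^ (m+k+2)) = ((2 ^ (m+k+2) : ℕ) : ℝ≥0∞) := by push_cast; ring
              _ ≤ _ := Nat.cast_le.2 hblock
        _ = ∑ _r ∈ Finset.Ioc (sp k) (sp (k+1)), (2 : ℝ≥0∞)⁻¹ ^ (m + k + 1) := by
            rw [Finset.sum_const, nsmul_eq_mul]
        _ ≤ ∑ r ∈ Finset.Ioc (sp k) (sp (k+1)), ((Bad U r).card : ℝ≥0∞) * (2 : ℝ≥0∞)⁻¹ ^ r :=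
            Finset.sum_le_sum hge
        _ ≤ 1 := kraftBad U hU _
    norm_num at this
  obtain ⟨r, hrmem, hrcard⟩ := main
  obtain ⟨hr1, hr2⟩ := Finset.mem_Ioc.1 hrmem
  have he : (eSet m r).card ≤ k + 1 := hesub r hr2 m
  refine ⟨r, by omega, by omega, lt_of_lt_of_le hrcard ?_⟩
  apply Nat.pow_le_pow_right (by norm_num)
  omega

lemma exists_ext (hU : U.Optimal) (τ : List Bool) :
    ∃ r σ, τ.length < r ∧ (σ : List Bool).length = r ∧ τ <+: σ ∧
      (∀ i, τ.length ≤ i → isSp i → σ.getD i false = false) ∧ r < U.K σ := by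
  classical
  set m := τ.length with hm
  obtain ⟨r, hr1, hr2, hr3⟩ := exists_good U hU m
  set s : Finset ℕ := Finset.range m ∪ eSet m r with hs
  have hdisj : Disjoint (Finset.range m) (eSet m r) := by
    rw [Finset.disjoint_left]
    intro i hi1 hi2
    have := Finset.mem_range.1 hi1
    have := (Finset.mem_filter.1 hi2).2.1
    omega
  have hscard : s.card = m + (eSet m r).card := by
    rw [hs, Finset.card_union_of_disjoint hdisj, Finset.card_range]
  have hsr : ∀ i ∈ s, i < r := by
    intro i hi
    rcases Finset.mem_union.1 hi with h | h
    · have := Finset.mem_range.1 h; omega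
    · exact Finset.mem_range.1 (Finset.mem_filter.1 h).1
  set g : ℕ → Bool := fun i => if i < m then τ.getD i false else false with hg
  set C := (allL r).filter (fun σ => ∀ i ∈ s, σ.getD i false = g i) with hC
  have hCcard : C.card = 2 ^ (r - m - (eSet m r).card) := by
    rw [hC, cardLists s hsr g, hscard, Nat.sub_sub]
  have hne : (C \ Bad U r).Nonempty := by
    rw [Finset.sdiff_nonempty]
    intro hsub
    have := Finset.card_le_card hsub
    omega
  obtain ⟨σ, hσ⟩ := hne
  obtain ⟨hσC, hσB⟩ := Finset.mem_sdiff.1 hσ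
  obtain ⟨hσall, hσs⟩ := Finset.mem_filter.1 hσC
  have hσlen : σ.length = r := mem_allL.1 hσall
  refine ⟨r, σ, hr1, hσlen, ?_, ?_, ?_⟩
  · apply prefix_of_getD (by omega)
    intro i hi
    have : i ∈ s := Finset.mem_union.2 (Or.inl (Finset.mem_range.2 hi))
    rw [hσs i this, hg]
    simp [hi, hm]
  · intro i him hisp
    rcases lt_or_ge i r with hir | hir
    · have : i ∈ s := Finset.mem_union.2 (Or.inr (by
        refine Finset.mem_filter.2 ⟨Finset.mem_range.2 hir, him, hisp⟩))
      rw [hσs i this, hg]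
      have : ¬ i < m := by omega
      simp [this]
    · apply List.getD_eq_default
      omega
  · by_contra hcon
    push_neg at hcon
    exact hσB ((mem_Bad U).2 ⟨hσlen, hcon⟩)

end S14
-- ===== Section 3: the recursive construction =====
namespace S14

def Lof (j : ℕ) : ℕ := 2 ^ (2*j+1)

def fposN (j : ℕ) : ℕ := sp (2*j+1)

lemma lt_fposN (j : ℕ) : j < fposN j := lt_trans (by omega) (lt_sp (2*j+1))

lemma Lof_lt_fposN (j : ℕ) : Lof j < fposN j := Nat.lt_two_pow_self

lemma fposN_gap (j : ℕ) : fposN j + Lof j < fposN (j+1) := by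
  have h1 := two_mul_sp_le (2*j+1)
  have h2 : sp (2*j+1+1) ≤ sp (2*(j+1)+1) := sp_mono.le_iff_le.2 (by omega)
  have h3 := Lof_lt_fposN j
  show sp (2*j+1) + Lof j < sp (2*(j+1)+1)
  unfold fposN at h3
  omega

variable (U : PFM (List Bool))

noncomputable def rOf (hU : U.Optimal) (τ : List Bool) : ℕ := (exists_ext U hU τ).choose

noncomputable def sOf (hU : U.Optimal) (τ : List Bool) : List Bool :=
  (exists_ext U hU τ).choose_spec.choose

lemma sOf_spec (hU : U.Optimal) (τ : List Bool) :
    τ.length < rOf U hU τ ∧ (sOf U hU τ).length = rOf U hU τ ∧ τ <+: sOf U hU τ ∧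
      (∀ i, τ.length ≤ i → isSp i → (sOf U hU τ).getD i false = false) ∧
      rOf U hU τ < U.K (sOf U hU τ) :=
  (exists_ext U hU τ).choose_spec.choose_spec

lemma exists_flag (n : ℕ) (v : ℕ) : ∃ j, v < fposN j :=
  ⟨v + n - n, by have := lt_fposN (v + n - n); have : fposN (v+n-n) = fposN (v + n - n) := rfl; omega⟩

noncomputable def jOf (hU : U.Optimal) (n : ℕ) (τ : List Bool) : ℕ :=
  Nat.find (exists_flag n (max (rOf U hU τ) (Nat.pair n (rOf U hU τ))))

lemma jOf_spec (hU : U.Optimal) (n : ℕ) (τ : List Bool) :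
    rOf U hU τ < fposN (jOf U hU n τ) ∧ Nat.pair n (rOf U hU τ) < fposN (jOf U hU n τ) := by
  have h := Nat.find_spec (exists_flag n (max (rOf U hU τ) (Nat.pair n (rOf U hU τ))))
  exact ⟨lt_of_le_of_lt (le_max_left _ _) h, lt_of_le_of_lt (le_max_right _ _) h⟩

def codeBits (L w : ℕ) : List Bool := (List.range L).map (Nat.testBit w)

noncomputable def stage (hU : U.Optimal) (n : ℕ) (τ : List Bool) : List Bool :=
  sOf U hU τ ++ (List.replicate (fposN (jOf U hU n τ) - rOf U hU τ) false ++
    ([true] ++ codeBits (Lof (jOf U hU n τ)) (Nat.pair n (rOf U hU τ))))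

noncomputable def st (hU : U.Optimal) : ℕ → List Bool
  | 0 => []
  | n+1 => stage U hU n (st hU n)

variable (hU : U.Optimal)

noncomputable def rr (n : ℕ) : ℕ := rOf U hU (st U hU n)

noncomputable def jn (n : ℕ) : ℕ := jOf U hU n (st U hU n)

noncomputable def Fp (n : ℕ) : ℕ := fposN (jn U hU n)

noncomputable def XX : ℕ → Bool := fun i => (st U hU (i+1)).getD i false

lemma st_succ (n : ℕ) : st U hU (n+1) = sOf U hU (st U hU n) ++
    (List.replicate (Fp U hU n - rr U hU n) false ++
      ([true] ++ codeBits (Lof (jn U hU n)) (Nat.pair n (rr U hU n)))) := rfl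

lemma rr_lt_Fp (n : ℕ) : rr U hU n < Fp U hU n := (jOf_spec U hU n _).1

lemma pair_lt_Fp (n : ℕ) : Nat.pair n (rr U hU n) < Fp U hU n := (jOf_spec U hU n _).2

lemma len_st_lt_rr (n : ℕ) : (st U hU n).length < rr U hU n := (sOf_spec U hU _).1

lemma len_sOf (n : ℕ) : (sOf U hU (st U hU n)).length = rr U hU n := (sOf_spec U hU _).2.1

lemma len_st_succ (n : ℕ) :
    (st U hU (n+1)).length = Fp U hU n + 1 + Lof (jn U hU n) := by
  rw [st_succ]
  simp [List.length_append, codeBits, len_sOf]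
  have h1 := rr_lt_Fp U hU n
  omega

lemma st_prefix_succ (n : ℕ) : st U hU n <+: st U hU (n+1) := by
  rw [st_succ]
  exact (sOf_spec U hU _).2.2.1.trans (List.prefix_append _ _)

lemma st_prefix {a b : ℕ} (h : a ≤ b) : st U hU a <+: st U hU b := by
  induction b with
  | zero => rw [Nat.le_zero.1 h]
  | succ b ih =>
    rcases Nat.lt_or_ge a (b+1) with h' | h'
    · exact (ih (by omega)).trans (st_prefix_succ U hU b)
    · rw [Nat.le_antisymm h h']

lemma len_st_mono (n : ℕ) : (st U hU n).length < (st U hU (n+1)).length := by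
  have h1 := len_st_lt_rr U hU n
  have h2 := rr_lt_Fp U hU n
  have h3 := len_st_succ U hU n
  omega

lemma le_len_st (n : ℕ) : n ≤ (st U hU n).length := by
  induction n with
  | zero => simp
  | succ n ih => have := len_st_mono U hU n; omega

lemma X_eq (n : ℕ) {i : ℕ} (hi : i < (st U hU n).length) :
    XX U hU i = (st U hU n).getD i false := by
  rw [XX]
  rcases le_total (i+1) n with h | h
  · exact (getD_prefix (st_prefix U hU h) (lt_of_lt_of_le (by omega) (le_len_st U hU (i+1))) false).symm
  · exact getD_prefix (st_prefix U hU h) hi false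

lemma seg_st (n L : ℕ) (h : L ≤ (st U hU n).length) :
    seg (XX U hU) L = (st U hU n).take L := by
  apply List.ext_getElem (by simp [seg, Nat.min_eq_left h])
  intro i h1 h2
  have hiL : i < L := by simpa [seg] using h1
  have hilen : i < (st U hU n).length := by omega
  have hseg : (seg (XX U hU) L)[i] = XX U hU i := by simp [seg]
  rw [hseg, List.getElem_take, X_eq U hU n hilen, List.getD_eq_getElem _ _ hilen]

lemma seg_rr (n : ℕ) : seg (XX U hU) (rr U hU n) = sOf U hU (st U hU n) := by
  have h1 : rr U hU n ≤ (st U hU (n+1)).length := by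
    have := len_st_succ U hU n; have := rr_lt_Fp U hU n; omega
  rw [seg_st U hU (n+1) _ h1, st_succ]
  rw [show rr U hU n = (sOf U hU (st U hU n)).length from (len_sOf U hU n).symm]
  exact List.take_left

lemma K_big (n : ℕ) : rr U hU n < U.K (seg (XX U hU) (rr U hU n)) := by
  rw [seg_rr]
  exact (sOf_spec U hU _).2.2.2.2

lemma rr_strictMono : StrictMono (rr U hU) := by
  apply strictMono_nat_of_lt_succ
  intro n
  have h1 := len_st_lt_rr U hU (n+1)
  have h2 := len_st_succ U hU n
  have h3 := rr_lt_Fp U hU n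
  omega

end S14
-- ===== Section 4: values of X at special positions =====
namespace S14

variable (U : PFM (List Bool)) (hU : U.Optimal)

lemma getD_replicate' (c : ℕ) {i : ℕ} (hi : i < c) :
    (List.replicate c false).getD i false = false := by
  rw [List.getD_eq_getElem _ _ (by simpa using hi)]
  simp

lemma stA (n : ℕ) {i : ℕ} (h1 : rr U hU n ≤ i) (h2 : i < Fp U hU n) :
    (st U hU (n+1)).getD i false = false := by
  have hr := rr_lt_Fp U hU n
  rw [st_succ, List.getD_append_right _ _ _ _ (by rw [len_sOf]; exact h1)]
  rw [len_sOf]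
  rw [List.getD_append _ _ _ _ (by simp; omega)]
  exact getD_replicate' _ (by omega)

lemma stB (n : ℕ) : (st U hU (n+1)).getD (Fp U hU n) false = true := by
  have hr := rr_lt_Fp U hU n
  rw [st_succ, List.getD_append_right _ _ _ _ (by rw [len_sOf]; omega)]
  rw [len_sOf]
  rw [List.getD_append_right _ _ _ _ (by simp)]
  have h0 : Fp U hU n - rr U hU n - (List.replicate (Fp U hU n - rr U hU n) (false : Bool)).length
      = 0 := by simp
  rw [h0]
  rfl

lemma stC (n : ℕ) {t : ℕ} (ht : t < Lof (jn U hU n)) :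
    (st U hU (n+1)).getD (Fp U hU n + 1 + t) false
      = Nat.testBit (Nat.pair n (rr U hU n)) t := by
  have hr := rr_lt_Fp U hU n
  rw [st_succ, List.getD_append_right _ _ _ _ (by rw [len_sOf]; omega)]
  rw [len_sOf]
  rw [List.getD_append_right _ _ _ _ (by simp; omega)]
  simp only [List.length_replicate]
  rw [show Fp U hU n + 1 + t - rr U hU n - (Fp U hU n - rr U hU n) = 1 + t by omega]
  rw [List.getD_append_right _ _ _ _ (by simp)]
  simp only [List.length_singleton]
  rw [show 1 + t - 1 = t by omega]
  rw [codeBits, List.getD_eq_getElem _ _ (by simpa using ht)]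
  simp

lemma stD (n : ℕ) {i : ℕ} (hm : (st U hU n).length ≤ i) (hlen : i < (st U hU (n+1)).length)
    (hsp : isSp i) (hne : i ≠ Fp U hU n) : (st U hU (n+1)).getD i false = false := by
  have hr := rr_lt_Fp U hU n
  have hls := len_st_succ U hU n
  rcases lt_or_ge i (rr U hU n) with h | h
  · have hpre : sOf U hU (st U hU n) <+: st U hU (n+1) := by
      rw [st_succ]; exact List.prefix_append _ _
    rw [getD_prefix hpre (by rw [len_sOf]; exact h)]
    exact (sOf_spec U hU _).2.2.2.1 i hm hsp
  · rcases lt_or_ge i (Fp U hU n) with h2 | h2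
    · exact stA U hU n h h2
    · exfalso
      obtain ⟨k, rfl⟩ := hsp
      have hFp : Fp U hU n = sp (2 * (jn U hU n) + 1) := rfl
      have hk : 2 * (jn U hU n) + 1 < k := by
        by_contra hcon
        push_neg at hcon
        have hle : sp k ≤ sp (2 * (jn U hU n) + 1) := sp_mono.le_iff_le.2 hcon
        rw [← hFp] at hle
        exact hne (le_antisymm hle h2)
      have h4 : sp (2 * (jn U hU n) + 1 + 1) ≤ sp k := sp_mono.le_iff_le.2 (by omega)
      have h5 := two_mul_sp_le (2 * (jn U hU n) + 1)
      have h6 : Lof (jn U hU n) < Fp U hU n := Lof_lt_fposN _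
      rw [← hFp] at h5
      omega

lemma X_Fp (n : ℕ) : XX U hU (Fp U hU n) = true := by
  have h : Fp U hU n < (st U hU (n+1)).length := by
    have := len_st_succ U hU n; omega
  rw [X_eq U hU (n+1) h]
  exact stB U hU n

lemma X_code (n : ℕ) {t : ℕ} (ht : t < Lof (jn U hU n)) :
    XX U hU (Fp U hU n + 1 + t) = Nat.testBit (Nat.pair n (rr U hU n)) t := by
  have h : Fp U hU n + 1 + t < (st U hU (n+1)).length := by
    have := len_st_succ U hU n; omega
  rw [X_eq U hU (n+1) h]
  exact stC U hU n ht

lemma X_special_false {i : ℕ} (hsp : isSp i) (hni : ∀ n, i ≠ Fp U hU n) :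
    XX U hU i = false := by
  classical
  have hex : ∃ n, i < (st U hU n).length :=
    ⟨i+1, lt_of_lt_of_le (by omega) (le_len_st U hU (i+1))⟩
  have hpos : Nat.find hex ≠ 0 := by
    intro h
    have := Nat.find_spec hex
    rw [h] at this
    simp [st] at this
  obtain ⟨n, hn⟩ : ∃ n, Nat.find hex = n + 1 := ⟨Nat.find hex - 1, by omega⟩
  have hspec : i < (st U hU (n+1)).length := hn ▸ Nat.find_spec hex
  have hlow : (st U hU n).length ≤ i := by
    by_contra hcon
    push_neg at hcon
    exact Nat.find_min hex (by omega) hcon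
  rw [X_eq U hU (n+1) hspec]
  exact stD U hU n hlow hspec hsp (hni n)

lemma X_even_special (k : ℕ) : XX U hU (sp (2*k)) = false := by
  apply X_special_false U hU ⟨2*k, rfl⟩
  intro n h
  have : sp (2*k) = sp (2 * (jn U hU n) + 1) := h
  have := sp_mono.injective this
  omega

lemma Fp_lt_len_succ (n : ℕ) : Fp U hU n < (st U hU (n+1)).length := by
  have := len_st_succ U hU n; omega

/-- any set flag below `Fp n` belongs to an earlier stage -/
lemma flag_identify {j' : ℕ} (n : ℕ) (hlt : fposN j' < Fp U hU n)
    (htrue : XX U hU (fposN j') = true) :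
    ∃ n' < n, j' = jn U hU n' := by
  have hsp : isSp (fposN j') := ⟨2*j'+1, rfl⟩
  have : ¬ (∀ n', fposN j' ≠ Fp U hU n') := by
    intro hcon
    rw [X_special_false U hU hsp hcon] at htrue
    exact Bool.false_ne_true htrue
  push_neg at this
  obtain ⟨n', hn'⟩ := this
  have hj : j' = jn U hU n' := by
    have : sp (2*j'+1) = sp (2 * (jn U hU n') + 1) := hn'
    have := sp_mono.injective this
    omega
  refine ⟨n', ?_, hj⟩
  by_contra hcon
  push_neg at hcon
  rcases Nat.eq_or_lt_of_le hcon with h | h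
  · rw [hn', h] at hlt
    exact lt_irrefl _ hlt
  · have h1 : (st U hU (n+1)).length ≤ (st U hU n').length := (st_prefix U hU h).length_le
    have h2 := len_st_lt_rr U hU n'
    have h3 := rr_lt_Fp U hU n'
    have h4 := Fp_lt_len_succ U hU n
    rw [hn'] at hlt
    omega

end S14
-- ===== Section 5: the parser =====
namespace S14

def num (ρ : List Bool) (j : ℕ) : ℕ :=
  (List.range (Lof j)).foldr (fun i acc => (ρ.getD (fposN j + 1 + i) false).toNat + 2 * acc) 0

def cand (n : ℕ) (ρ : List Bool) (j : ℕ) : Bool :=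
  (decide (fposN j + Lof j < ρ.length)) &&
    (ρ.getD (fposN j) false && decide ((num ρ j).unpair.1 = n))

def findB (n : ℕ) (ρ : List Bool) : ℕ → Option ℕ
  | 0 => none
  | k+1 => match findB n ρ k with
    | some j => some j
    | none => if cand n ρ k then some k else none

def parseF (ρ : List Bool) (n : ℕ) : Option ℕ :=
  (findB n ρ ρ.length).map (fun j => (num ρ j).unpair.2)

lemma cand_bound {n j : ℕ} {ρ : List Bool} (h : cand n ρ j = true) :
    fposN j + Lof j < ρ.length := by
  rw [cand, Bool.and_eq_true, Bool.and_eq_true] at h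
  exact decide_eq_true_iff.1 h.1

lemma cand_flag {n j : ℕ} {ρ : List Bool} (h : cand n ρ j = true) :
    ρ.getD (fposN j) false = true := by
  rw [cand, Bool.and_eq_true, Bool.and_eq_true] at h
  exact h.2.1

lemma cand_tag {n j : ℕ} {ρ : List Bool} (h : cand n ρ j = true) :
    (num ρ j).unpair.1 = n := by
  rw [cand, Bool.and_eq_true, Bool.and_eq_true] at h
  exact decide_eq_true_iff.1 h.2.2

lemma decode_gen : ∀ (L a w : ℕ) (ρ : List Bool), w < 2 ^ L →
    (∀ i < L, ρ.getD (a + i) false = w.testBit i) →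
    (List.range L).foldr (fun i acc => (ρ.getD (a + i) false).toNat + 2 * acc) 0 = w := by
  intro L
  induction L with
  | zero =>
    intro a w ρ hw _
    simp only [List.range_zero, List.foldr_nil]
    omega
  | succ L ih =>
    intro a w ρ hw hb
    rw [List.range_succ_eq_map, List.foldr_cons, List.foldr_map]
    have hfun : List.foldr (fun (i acc : ℕ) => (ρ.getD (a + Nat.succ i) false).toNat + 2 * acc) 0
          (List.range L)
        = List.foldr (fun (i acc : ℕ) => (ρ.getD ((a+1) + i) false).toNat + 2 * acc) 0
          (List.range L) := by
      apply List.foldr_ext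
      intro i _ acc
      rw [show a + Nat.succ i = (a+1) + i by omega]
    rw [hfun]
    have hpow : 2 ^ (L+1) = 2 ^ L * 2 := pow_succ 2 L
    rw [ih (a+1) (w/2) ρ (by omega) (fun i hi => by
      rw [show a+1+i = a+(i+1) by omega, hb (i+1) (by omega), Nat.testBit_add_one])]
    have h0 := hb 0 (by omega)
    rw [h0, Nat.testBit_zero]
    rcases Nat.mod_two_eq_zero_or_one w with h | h <;> simp [h] <;> omega

lemma findB_none {n : ℕ} {ρ : List Bool} :
    ∀ k, (findB n ρ k = none ↔ ∀ i < k, cand n ρ i = false) := by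
  intro k
  induction k with
  | zero => simp [findB]
  | succ k ih =>
    rw [findB]
    cases h : findB n ρ k with
    | some j =>
      simp only []
      constructor
      · intro hc; exact absurd hc (by simp)
      · intro hall
        have : findB n ρ k = none := ih.2 (fun i hi => hall i (by omega))
        rw [h] at this
        exact absurd this (by simp)
    | none =>
      have hall := ih.1 h
      constructor
      · intro hc i hi
        rcases Nat.lt_or_ge i k with h' | h'
        · exact hall i h'
        · have : i = k := by omega
          subst this
          by_contra hcand
          simp only [eq_true_of_ne_false hcand, if_true] at hc
          exact absurd hc (by simp)
      · intro hall'
        have : cand n ρ k = false := hall' k (by omega)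
        simp [this]

lemma findB_some {n : ℕ} {ρ : List Bool} :
    ∀ {k j}, (findB n ρ k = some j ↔
      j < k ∧ cand n ρ j = true ∧ ∀ i < j, cand n ρ i = false) := by
  intro k
  induction k with
  | zero => intro j; simp [findB]
  | succ k ih =>
    intro j
    rw [findB]
    cases h : findB n ρ k with
    | some j' =>
      obtain ⟨hj'k, hc', hmin'⟩ := ih.1 h
      simp only [Option.some.injEq]
      constructor
      · rintro rfl
        exact ⟨by omega, hc', hmin'⟩
      · rintro ⟨hjk, hc, hmin⟩
        rcases Nat.lt_trichotomy j j' with h' | h' | h'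
        · rw [hmin' j h'] at hc; exact absurd hc (by simp)
        · exact h'.symm
        · rw [hmin j' h'] at hc'; exact absurd hc' (by simp)
    | none =>
      have hall := findB_none k |>.1 h
      by_cases hc : cand n ρ k = true
      · simp only [hc, if_true, Option.some.injEq]
        constructor
        · rintro rfl
          exact ⟨by omega, hc, hall⟩
        · rintro ⟨hjk, hcj, hmin⟩
          rcases Nat.lt_or_ge j k with h' | h'
          · rw [hall j h'] at hcj; exact absurd hcj (by simp)
          · omega
      · rw [if_neg hc]
        constructor
        · intro hcon; exact absurd hcon (by simp)
        · rintro ⟨hjk, hcj, hmin⟩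
          rcases Nat.lt_or_ge j k with h' | h'
          · rw [hall j h'] at hcj; exact absurd hcj (by simp)
          · have : j = k := by omega
            subst this
            exact absurd hcj hc

lemma fposN_mono : StrictMono fposN := fun a b h => sp_mono (by omega)

lemma num_agree {ρ₀ ρ₁ : List Bool} (h : ρ₀ <+: ρ₁) {j : ℕ}
    (hj : fposN j + Lof j < ρ₀.length) : num ρ₁ j = num ρ₀ j := by
  unfold num
  apply List.foldr_ext
  intro i hi acc
  have hiL : i < Lof j := List.mem_range.1 hi
  rw [getD_prefix h (by omega)]

lemma cand_agree {ρ₀ ρ₁ : List Bool} (h : ρ₀ <+: ρ₁) {n j : ℕ}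
    (hj : fposN j + Lof j < ρ₀.length) : cand n ρ₁ j = cand n ρ₀ j := by
  have hlen := h.length_le
  unfold cand
  rw [getD_prefix h (by omega), num_agree h hj]
  congr 1
  simp only [decide_eq_decide]
  omega

lemma parse_mono {ρ₀ ρ₁ : List Bool} (h : ρ₀ <+: ρ₁) {n y : ℕ}
    (hy : parseF ρ₀ n = some y) : parseF ρ₁ n = some y := by
  unfold parseF at hy ⊢
  obtain ⟨j, hj, hval⟩ := Option.map_eq_some_iff.1 hy
  obtain ⟨hjlt, hc, hmin⟩ := findB_some.1 hj
  have hbound := cand_bound hc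
  have hc1 : cand n ρ₁ j = true := by rw [cand_agree h hbound]; exact hc
  have hmin1 : ∀ i < j, cand n ρ₁ i = false := by
    intro i hi
    have hgap := fposN_gap i
    have hle : fposN (i+1) ≤ fposN j := fposN_mono.le_iff_le.2 (by omega)
    rw [cand_agree h (by omega)]
    exact hmin i hi
  have hjlen : j < ρ₁.length := by
    have := lt_fposN j
    have := h.length_le
    omega
  rw [findB_some.2 ⟨hjlen, hc1, hmin1⟩]
  rw [← hval, Option.map_some]
  rw [num_agree h hbound]

end S14
-- ===== Section 6: parser correctness on X =====
namespace S14

lemma seg_getD (X : ℕ → Bool) {L i : ℕ} (hi : i < L) : (seg X L).getD i false = X i := by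
  rw [seg, List.getD_eq_getElem _ _ (by simpa using hi)]
  simp

lemma seg_length (X : ℕ → Bool) (L : ℕ) : (seg X L).length = L := by simp [seg]

variable (U : PFM (List Bool)) (hU : U.Optimal)

lemma pow_Lof (j : ℕ) : 2 ^ (Lof j) = fposN j := rfl

lemma num_stage (n' : ℕ) {ρ : List Bool} (hρ : ∀ i < ρ.length, ρ.getD i false = XX U hU i)
    (hlen : (st U hU (n'+1)).length ≤ ρ.length) :
    num ρ (jn U hU n') = Nat.pair n' (rr U hU n') := by
  have hls := len_st_succ U hU n'
  unfold num
  apply decode_gen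
  · rw [pow_Lof]
    exact pair_lt_Fp U hU n'
  · intro i hi
    have hpos : fposN (jn U hU n') + 1 + i < ρ.length := by
      have : fposN (jn U hU n') = Fp U hU n' := rfl
      omega
    rw [hρ _ hpos]
    exact X_code U hU n' hi

lemma parse_X (n : ℕ) :
    parseF (seg (XX U hU) ((st U hU (n+1)).length)) n = some (rr U hU n) := by
  set s := (st U hU (n+1)).length with hs
  set ρ := seg (XX U hU) s with hρdef
  have hρlen : ρ.length = s := seg_length _ _
  have hρ : ∀ i < ρ.length, ρ.getD i false = XX U hU i := by
    intro i hi
    exact seg_getD _ (by omega)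
  have hls := len_st_succ U hU n
  have hFp : fposN (jn U hU n) = Fp U hU n := rfl
  have hcand : cand n ρ (jn U hU n) = true := by
    rw [cand, Bool.and_eq_true, Bool.and_eq_true]
    refine ⟨decide_eq_true_iff.2 (by omega), ?_, decide_eq_true_iff.2 ?_⟩
    · rw [hρ _ (by omega), hFp]
      exact X_Fp U hU n
    · rw [num_stage U hU n hρ (by omega)]
      simp [Nat.unpair_pair]
  have hmin : ∀ j' < jn U hU n, cand n ρ j' = false := by
    intro j' hj'
    by_contra hcon
    have hc : cand n ρ j' = true := by
      cases h : cand n ρ j' with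
      | false => exact absurd h hcon
      | true => rfl
    have hlt : fposN j' < Fp U hU n := by
      rw [← hFp]
      exact fposN_mono hj'
    have htrue : XX U hU (fposN j') = true := by
      have hb := cand_bound hc
      have hL := Lof_lt_fposN j'
      rw [← hρ _ (by omega)]
      exact cand_flag hc
    obtain ⟨n', hn'n, rfl⟩ := flag_identify U hU n hlt htrue
    have hlen' : (st U hU (n'+1)).length ≤ s := by
      rw [hs]
      exact (st_prefix U hU (by omega)).length_le
    have := cand_tag hc
    rw [num_stage U hU n' hρ (by omega)] at this
    rw [Nat.unpair_pair] at this
    omega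
  have hjlen : jn U hU n < ρ.length := by
    have h1 := lt_fposN (jn U hU n)
    rw [hFp] at h1
    omega
  unfold parseF
  rw [hρlen, findB_some.2 ⟨by omega, hcand, hmin⟩, Option.map_some]
  rw [num_stage U hU n hρ (by omega), Nat.unpair_pair]

end S14
-- ===== Section 7: computability of the parser =====
namespace S14
open Primrec

lemma primrec_band {α : Type} [Primcodable α] {f g : α → Bool} (hf : Primrec f)
    (hg : Primrec g) : Primrec fun a => f a && g a :=
  (Primrec.cond hf hg (Primrec.const false)).of_eq (by intro a; cases h : f a <;> simp [h])

lemma primrec_toNat : Primrec Bool.toNat :=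
  (Primrec.cond Primrec.id (Primrec.const 1) (Primrec.const 0)).of_eq
    (by intro b; cases b <;> rfl)

lemma primrec_pow2 : Primrec (fun n : ℕ => 2 ^ n) := by
  have key : ∀ n, (Nat.rec 1 (fun _ IH => 2 * IH) n : ℕ) = 2 ^ n := by
    intro n
    induction n with
    | zero => rfl
    | succ n ih =>
      show 2 * (Nat.rec 1 (fun _ IH => 2 * IH) n : ℕ) = 2 ^ (n+1)
      rw [ih, pow_succ]; ring
  have h : Primrec₂ (fun (_ : ℕ) (p : ℕ × ℕ) => 2 * p.2) :=
    Primrec.nat_double.comp (Primrec.snd.comp Primrec.snd)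
  exact (Primrec.nat_rec' Primrec.id (Primrec.const 1) h).of_eq (fun n => key n)

lemma primrec_sp : Primrec sp := primrec_pow2.comp primrec_pow2

lemma primrec_Lof : Primrec Lof := primrec_pow2.comp Primrec.nat_double_succ

lemma primrec_fposN : Primrec fposN := primrec_sp.comp Primrec.nat_double_succ

lemma primrec_num : Primrec (fun a : List Bool × ℕ => num a.1 a.2) := by
  have hf : Primrec (fun a : List Bool × ℕ => List.range (Lof a.2)) :=
    Primrec.list_range.comp (primrec_Lof.comp Primrec.snd)
  have hpos : Primrec (fun x : (List Bool × ℕ) × ℕ × ℕ => fposN x.1.2 + 1 + x.2.1) :=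
    Primrec.nat_add.comp
      (Primrec.nat_add.comp (primrec_fposN.comp (Primrec.snd.comp Primrec.fst))
        (Primrec.const 1)) (Primrec.fst.comp Primrec.snd)
  have hgetD : Primrec (fun x : (List Bool × ℕ) × ℕ × ℕ => x.1.1.getD (fposN x.1.2 + 1 + x.2.1) false) :=
    (Primrec.list_getD false).comp (Primrec.fst.comp Primrec.fst) hpos
  have hstep : Primrec₂ (fun (a : List Bool × ℕ) (p : ℕ × ℕ) =>
      (a.1.getD (fposN a.2 + 1 + p.1) false).toNat + 2 * p.2) :=
    Primrec.nat_add.comp (primrec_toNat.comp hgetD)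
      (Primrec.nat_double.comp (Primrec.snd.comp Primrec.snd))
  exact (Primrec.list_foldr hf (Primrec.const 0) hstep).of_eq (fun a => rfl)

lemma primrec_cand : Primrec (fun x : (ℕ × List Bool) × ℕ => cand x.1.1 x.1.2 x.2) := by
  have hρ : Primrec (fun x : (ℕ × List Bool) × ℕ => x.1.2) := Primrec.snd.comp Primrec.fst
  have hn : Primrec (fun x : (ℕ × List Bool) × ℕ => x.1.1) := Primrec.fst.comp Primrec.fst
  have hj : Primrec (fun x : (ℕ × List Bool) × ℕ => x.2) := Primrec.snd
  have hc1 : Primrec (fun x : (ℕ × List Bool) × ℕ =>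
      decide (fposN x.2 + Lof x.2 < x.1.2.length)) :=
    (PrimrecRel.comp Primrec.nat_lt
      (Primrec.nat_add.comp (primrec_fposN.comp hj) (primrec_Lof.comp hj))
      (Primrec.list_length.comp hρ)).decide
  have hc2 : Primrec (fun x : (ℕ × List Bool) × ℕ => x.1.2.getD (fposN x.2) false) :=
    (Primrec.list_getD false).comp hρ (primrec_fposN.comp hj)
  have hnum' : Primrec (fun x : (ℕ × List Bool) × ℕ => num x.1.2 x.2) :=
    primrec_num.comp (Primrec.pair hρ hj)
  have hc3 : Primrec (fun x : (ℕ × List Bool) × ℕ => decide ((num x.1.2 x.2).unpair.1 = x.1.1)) :=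
    (PrimrecRel.comp Primrec.eq (Primrec.fst.comp (Primrec.unpair.comp hnum')) hn).decide
  exact primrec_band hc1 (primrec_band hc2 hc3)

set_option maxHeartbeats 1000000 in
lemma primrec_findB : Primrec₂ (fun (p : ℕ × List Bool) (k : ℕ) => findB p.1 p.2 k) := by
  have hstep : Primrec₂ (fun (a : ℕ × List Bool) (p : ℕ × Option ℕ) =>
      (Option.casesOn p.2 (bif cand a.1 a.2 p.1 then some p.1 else none) some : Option ℕ)) := by
    have ho : Primrec (fun x : (ℕ × List Bool) × ℕ × Option ℕ => x.2.2) :=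
      Primrec.snd.comp Primrec.snd
    have hcand' : Primrec (fun x : (ℕ × List Bool) × ℕ × Option ℕ => cand x.1.1 x.1.2 x.2.1) :=
      primrec_cand.comp (Primrec.pair Primrec.fst (Primrec.fst.comp Primrec.snd))
    have hifcase : Primrec (fun x : (ℕ × List Bool) × ℕ × Option ℕ =>
        (bif cand x.1.1 x.1.2 x.2.1 then some x.2.1 else none : Option ℕ)) :=
      Primrec.cond hcand' (Primrec.option_some.comp (Primrec.fst.comp Primrec.snd))
        (Primrec.const none)
    have hsomecase : Primrec₂ (fun (_ : (ℕ × List Bool) × ℕ × Option ℕ) (j : ℕ) =>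
        (some j : Option ℕ)) := Primrec.option_some.comp Primrec.snd
    exact Primrec.option_casesOn ho hifcase hsomecase
  have h0 := Primrec.nat_rec (f := fun _ : ℕ × List Bool => (none : Option ℕ))
    (Primrec.const none) hstep
  refine h0.of_eq ?_
  intro p k
  induction k with
  | zero => rfl
  | succ k ih =>
    show (Option.casesOn (Nat.rec _ _ k) _ _ : Option ℕ) = findB p.1 p.2 (k+1)
    rw [ih]
    rw [show findB p.1 p.2 (k+1) = (match findB p.1 p.2 k with
      | some j => some j
      | none => if cand p.1 p.2 k then some k else none) from rfl]
    cases h : findB p.1 p.2 k with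
    | some j => rfl
    | none =>
      show (bif cand p.1 p.2 k then some k else none) = _
      cases hc : cand p.1 p.2 k <;> simp [hc]

lemma computable_parseF : Computable (fun p : List Bool × ℕ => parseF p.1 p.2) := by
  have hfind : Primrec (fun p : List Bool × ℕ => findB p.2 p.1 p.1.length) :=
    primrec_findB.comp (Primrec.pair Primrec.snd Primrec.fst)
      (Primrec.list_length.comp Primrec.fst)
  have hmap : Primrec₂ (fun (p : List Bool × ℕ) (j : ℕ) => (num p.1 j).unpair.2) :=
    Primrec.snd.comp (Primrec.unpair.comp
      (primrec_num.comp (Primrec.pair (Primrec.fst.comp Primrec.fst) Primrec.snd)))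
  exact (Primrec.option_map hfind hmap).to_comp

/-- the oracle Turing functional decoding `r` -/
noncomputable def ΦR : TFun ℕ where
  φ := fun ρ n => (parseF ρ n : Part ℕ)
  comp := Computable.ofOption computable_parseF
  mono := by
    intro ρ₀ ρ₁ hpre n y hy
    rw [Part.mem_ofOption] at hy ⊢
    exact parse_mono hpre (Option.mem_def.1 hy)

end S14
-- ===== Section 8: the Martin-Löf test =====
namespace S14

lemma seg_getD' (X : ℕ → Bool) {L i : ℕ} (hi : i < L) (d : Bool) :
    (seg X L).getD i d = X i := by
  rw [List.getD_eq_getElem _ _ (by simpa [seg] using hi)]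
  simp [seg]

def LL (n : ℕ) : ℕ := sp (2*n) + 1

def Wb (n : ℕ) (τ : List Bool) : Bool :=
  decide (τ.length = LL n) &&
    (List.range (n+1)).foldr (fun k acc => (!(τ.getD (sp (2*k)) true)) && acc) true

lemma foldr_all (f : ℕ → Bool) (l : List ℕ) :
    l.foldr (fun k acc => f k && acc) true = true ↔ ∀ k ∈ l, f k = true := by
  induction l with
  | nil => simp
  | cons a l ih => simp [Bool.and_eq_true, ih]

lemma Wb_iff {n : ℕ} {τ : List Bool} : Wb n τ = true ↔
    τ.length = LL n ∧ ∀ k < n+1, τ.getD (sp (2*k)) true = false := by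
  rw [Wb, Bool.and_eq_true, decide_eq_true_iff, foldr_all]
  constructor
  · rintro ⟨h1, h2⟩
    refine ⟨h1, fun k hk => ?_⟩
    have := h2 k (List.mem_range.2 hk)
    simpa using this
  · rintro ⟨h1, h2⟩
    refine ⟨h1, fun k hk => ?_⟩
    have := h2 k (List.mem_range.1 hk)
    simpa using this

def WSet (n : ℕ) : Set (List Bool) := {τ | Wb n τ = true}

lemma primrec_LL : Primrec LL :=
  Primrec.succ.comp (primrec_sp.comp Primrec.nat_double)

lemma primrec_Wb : Primrec (fun a : ℕ × List Bool => Wb a.1 a.2) := by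
  have h1 : Primrec (fun a : ℕ × List Bool => decide (a.2.length = LL a.1)) :=
    (PrimrecRel.comp Primrec.eq (Primrec.list_length.comp Primrec.snd)
      (primrec_LL.comp Primrec.fst)).decide
  have hf : Primrec (fun a : ℕ × List Bool => List.range (a.1 + 1)) :=
    Primrec.list_range.comp (Primrec.succ.comp Primrec.fst)
  have hgetD : Primrec (fun x : (ℕ × List Bool) × ℕ × Bool => x.1.2.getD (sp (2 * x.2.1)) true) :=
    (Primrec.list_getD true).comp (Primrec.snd.comp Primrec.fst)
      (primrec_sp.comp (Primrec.nat_double.comp (Primrec.fst.comp Primrec.snd)))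
  have hnot : Primrec (fun x : (ℕ × List Bool) × ℕ × Bool => !(x.1.2.getD (sp (2 * x.2.1)) true)) :=
    (Primrec.cond hgetD (Primrec.const false) (Primrec.const true)).of_eq
      (by intro x; cases h : x.1.2.getD (sp (2 * x.2.1)) true <;> simp [h])
  have hstep : Primrec₂ (fun (a : ℕ × List Bool) (p : ℕ × Bool) =>
      (!(a.2.getD (sp (2 * p.1)) true)) && p.2) :=
    primrec_band hnot (Primrec.snd.comp Primrec.snd)
  have h2 : Primrec (fun a : ℕ × List Bool =>
      (List.range (a.1+1)).foldr (fun k acc => (!(a.2.getD (sp (2*k)) true)) && acc) true) :=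
    (Primrec.list_foldr hf (Primrec.const true) hstep).of_eq (fun a => rfl)
  exact primrec_band h1 h2

lemma ce_W : CEPred fun p : ℕ × List Bool => p.2 ∈ WSet p.1 := by
  rw [CEPred]
  have hP : Primrec (fun a : ℕ × List Bool => decide (Wb a.1 a.2 = true)) :=
    primrec_Wb.of_eq (by intro a; cases h : Wb a.1 a.2 <;> simp [h])
  have h1 : Computable (fun a : ℕ × List Bool =>
      if Wb a.1 a.2 = true then (some () : Option Unit) else none) :=
    (Primrec.ite hP.primrecPred (Primrec.const (some ())) (Primrec.const none)).to_comp
  refine (Computable.ofOption h1).of_eq ?_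
  intro a
  by_cases h : Wb a.1 a.2 = true
  · rw [if_pos h]
    have : a.2 ∈ WSet a.1 := h
    rw [Part.assert_pos this]
    rfl
  · rw [if_neg h]
    have : ¬ (a.2 ∈ WSet a.1) := h
    rw [Part.assert_neg this]
    rfl

lemma sp_2n_injective : Function.Injective (fun k => sp (2*k)) := by
  intro a b h
  have := sp_mono.injective h
  omega

lemma meas_W (n : ℕ) :
    (∑' σ : WSet n, ((2 : ℝ≥0∞))⁻¹ ^ (σ : List Bool).length) ≤ 2⁻¹ ^ n := by
  classical
  set L := LL n with hL
  set sfin := (Finset.range (n+1)).image (fun k => sp (2*k)) with hsfin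
  have hsub : ∀ i ∈ sfin, i < L := by
    intro i hi
    obtain ⟨k, hk, rfl⟩ := Finset.mem_image.1 hi
    have hk' := Finset.mem_range.1 hk
    have : sp (2*k) ≤ sp (2*n) := sp_mono.le_iff_le.2 (by omega)
    rw [hL, LL]
    omega
  set WF := (allL L).filter (fun τ => ∀ i ∈ sfin, τ.getD i false = false) with hWF
  have hWeq : WSet n = ↑WF := by
    ext τ
    rw [WSet, Set.mem_setOf_eq, Wb_iff, Finset.coe_filter, Set.mem_setOf_eq, mem_allL]
    constructor
    · rintro ⟨h1, h2⟩
      refine ⟨h1, fun i hi => ?_⟩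
      obtain ⟨k, hk, rfl⟩ := Finset.mem_image.1 hi
      have hlt : sp (2*k) < τ.length := by rw [h1]; exact hsub _ hi
      rw [List.getD_eq_getElem _ _ hlt]
      rw [← List.getD_eq_getElem τ true hlt]
      exact h2 k (Finset.mem_range.1 hk)
    · rintro ⟨h1, h2⟩
      refine ⟨h1, fun k hk => ?_⟩
      have hmem : sp (2*k) ∈ sfin := Finset.mem_image.2 ⟨k, Finset.mem_range.2 hk, rfl⟩
      have hlt : sp (2*k) < τ.length := by rw [h1]; exact hsub _ hmem
      rw [List.getD_eq_getElem _ _ hlt]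
      rw [← List.getD_eq_getElem τ false hlt]
      exact h2 _ hmem
  have htsum : (∑' σ : WSet n, ((2 : ℝ≥0∞))⁻¹ ^ (σ : List Bool).length)
      = ∑ τ ∈ WF, ((2 : ℝ≥0∞))⁻¹ ^ τ.length := by
    rw [hWeq]
    exact Finset.tsum_subtype' WF (fun σ => ((2 : ℝ≥0∞))⁻¹ ^ σ.length)
  rw [htsum]
  have hcardW : WF.card = 2 ^ (L - (n+1)) := by
    rw [hWF]
    rw [cardLists sfin hsub (fun _ => false)]
    congr 2
    rw [hsfin, Finset.card_image_of_injective _ sp_2n_injective, Finset.card_range]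
  have hlen : ∀ τ ∈ WF, ((2 : ℝ≥0∞))⁻¹ ^ τ.length = 2⁻¹ ^ L := by
    intro τ hτ
    rw [mem_allL.1 (Finset.mem_filter.1 hτ).1]
  rw [Finset.sum_congr rfl hlen, Finset.sum_const, nsmul_eq_mul, hcardW]
  have hLbig : n + 1 ≤ L := by
    have := lt_sp (2*n)
    rw [hL, LL]
    omega
  have : ((2 ^ (L - (n+1)) : ℕ) : ℝ≥0∞) * (2:ℝ≥0∞)⁻¹ ^ L = 2⁻¹ ^ (n+1) := by
    have hsplit : (2:ℝ≥0∞)⁻¹ ^ L = 2⁻¹ ^ (L - (n+1)) * 2⁻¹ ^ (n+1) := by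
      rw [← pow_add]; congr 1; omega
    rw [hsplit, ← mul_assoc]
    have : ((2 ^ (L - (n+1)) : ℕ) : ℝ≥0∞) = (2:ℝ≥0∞) ^ (L - (n+1)) := by push_cast; ring
    rw [this, ← mul_pow, ENNReal.mul_inv_cancel (by norm_num) (by norm_num), one_pow, one_mul]
  rw [this]
  exact pow_le_pow_of_le_one zero_le (ENNReal.inv_le_one.2 one_le_two) (by omega)

noncomputable def TT : MLTest := { W := WSet, ce := ce_W, meas := meas_W }

variable (U : PFM (List Bool)) (hU : U.Optimal)

lemma X_in_W (n : ℕ) : seg (XX U hU) (LL n) ∈ WSet n := by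
  rw [WSet, Set.mem_setOf_eq, Wb_iff]
  refine ⟨seg_length _ _, fun k hk => ?_⟩
  have hlt : sp (2*k) < LL n := by
    have : sp (2*k) ≤ sp (2*n) := sp_mono.le_iff_le.2 (by omega)
    rw [LL]; omega
  rw [seg_getD' _ hlt]
  exact X_even_special U hU k

lemma not_MLRandom : ¬ MLRandom (XX U hU) := by
  intro h
  obtain ⟨n, hn⟩ := h TT
  apply hn (seg (XX U hU) (LL n)) (X_in_W U hU n)
  rw [seg_length]

end S14
theorem stmt14 (U : PFM (List Bool)) (hU : U.Optimal) :
    ∃ (X : ℕ → Bool) (ℓ r : ℕ → ℕ),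
      Computable ℓ ∧ StrictMono ℓ ∧ (∀ n : ℕ, X (ℓ n - 1) = false) ∧ ¬ MLRandom X ∧
      StrictMono r ∧ ComputableFrom X r ∧ ∀ n : ℕ, r n < U.K (seg X (r n)) := by
  refine ⟨S14.XX U hU, S14.LL, S14.rr U hU, ?_, ?_, ?_, ?_, ?_, ?_, ?_⟩
  · exact S14.primrec_LL.to_comp
  · intro a b h
    have := S14.sp_mono (show 2*a < 2*b by omega)
    rw [S14.LL, S14.LL]
    omega
  · intro n
    rw [S14.LL, Nat.add_sub_cancel]
    exact S14.X_even_special U hU n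
  · exact S14.not_MLRandom U hU
  · exact S14.rr_strictMono U hU
  · refine ⟨S14.ΦR, fun n => ⟨(S14.st U hU (n+1)).length, ?_⟩⟩
    show S14.rr U hU n ∈ Part.ofOption _
    rw [Part.mem_ofOption]
    exact Option.mem_def.2 (S14.parse_X U hU n)
  · exact S14.K_big U hU
end
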